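/- Second passage from the (A′)(B′) condition to the (A)(B) condition. Let X₁, Y₁, X₂, Y₂ be metric spaces and suppose the correspondence H ∼ (F,G) satisfies the (A′)(α̃,λ̃_u) and (B′)(β̃,λ̃_s) conditions, where α̃, β̃ ≥ 0, λ̃_s, λ̃_u > 0 and λ̃_s·λ̃_u < 1. Let ρ₁, ρ₂ be real numbers with λ̃_s·λ̃_u < ρ₂ < (λ̃_s·λ̃_u)^{1/2} and 1 − ρ₂⁻¹·λ̃_s·λ̃_u < ρ₁ < 1 − ρ₂, and set ρ = ρ₁ + ρ₂ (so ρ < 1). If α̃·β̃ ≤ ρ₁·(1 − ρ₂⁻¹·λ̃_s·λ̃_u), then, with α = ρ₁⁻¹·α̃, β = ρ₁⁻¹·β̃, λ_s = λ̃_s/(1 − α·β̃), λ_u = λ̃_u/(1 − β·α̃), the correspondence H satisfies the (A)(α; ρα, λ_u)(B)(β; ρβ, λ_s) condition; furthermore α·β < 1 and λ_s·λ_u < 1. -/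
import Mathlib

set_option maxHeartbeats 1000000

/-- Second passage from the (A′)(B′) condition to the (A)(B) condition. -/
theorem second_passage_A'B'_to_AB
    {X₁ Y₁ X₂ Y₂ : Type*}
    [MetricSpace X₁] [MetricSpace Y₁] [MetricSpace X₂] [MetricSpace Y₂]
    (F : X₁ → Y₂ → X₂) (G : X₁ → Y₂ → Y₁)
    (αt βt lst lut ρ₁ ρ₂ : ℝ)
    (hαt : 0 ≤ αt) (hβt : 0 ≤ βt) (hlst : 0 < lst) (hlut : 0 < lut)
    -- (A′)(α̃, λ̃_u) condition
    (hA'F : ∀ (x : X₁) (y y' : Y₂), dist (F x y) (F x y') ≤ αt * dist y y')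
    (hA'G : ∀ (x : X₁) (y y' : Y₂), dist (G x y) (G x y') ≤ lut * dist y y')
    -- (B′)(β̃, λ̃_s) condition
    (hB'G : ∀ (y : Y₂) (x x' : X₁), dist (G x y) (G x' y) ≤ βt * dist x x')
    (hB'F : ∀ (y : Y₂) (x x' : X₁), dist (F x y) (F x' y) ≤ lst * dist x x')
    (hll : lst * lut < 1)
    (hρ₂l : lst * lut < ρ₂) (hρ₂u : ρ₂ < Real.sqrt (lst * lut))
    (hρ₁l : 1 - (lst * lut) / ρ₂ < ρ₁) (hρ₁u : ρ₁ < 1 - ρ₂)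
    (hαβ : αt * βt ≤ ρ₁ * (1 - (lst * lut) / ρ₂)) :
    ∀ ρ α β lams lamu : ℝ,
      ρ = ρ₁ + ρ₂ →
      α = αt / ρ₁ → β = βt / ρ₁ →
      lams = lst / (1 - α * βt) → lamu = lut / (1 - β * αt) →
      ρ < 1 ∧
      -- H satisfies the (A)(α; ρα, λ_u)(B)(β; ρβ, λ_s) condition
      (∀ (x₁ x₁' : X₁) (y₂ y₂' : Y₂),
        dist x₁ x₁' ≤ α * dist (G x₁ y₂) (G x₁' y₂') →
          dist (F x₁ y₂) (F x₁' y₂') ≤ ρ * α * dist y₂ y₂' ∧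
            dist (G x₁ y₂) (G x₁' y₂') ≤ lamu * dist y₂ y₂') ∧
      (∀ (x₁ x₁' : X₁) (y₂ y₂' : Y₂),
        dist y₂ y₂' ≤ β * dist (F x₁ y₂) (F x₁' y₂') →
          dist (G x₁ y₂) (G x₁' y₂') ≤ ρ * β * dist x₁ x₁' ∧
            dist (F x₁ y₂) (F x₁' y₂') ≤ lams * dist x₁ x₁') ∧
      α * β < 1 ∧ lams * lamu < 1 := by
  intro ρ α β lams lamu hρ hα hβ hls hlu
  subst hρ hα hβ hls hlu
  have hllpos : 0 < lst * lut := mul_pos hlst hlut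
  have hρ₂pos : 0 < ρ₂ := hllpos.trans hρ₂l
  have hllρ₂ : lst * lut / ρ₂ < 1 := (div_lt_one hρ₂pos).2 hρ₂l
  have hρ₁pos : 0 < ρ₁ := by linarith
  have hρ₂sq : ρ₂ ^ 2 < lst * lut := by
    nlinarith [Real.sq_sqrt hllpos.le, Real.sqrt_nonneg (lst * lut)]
  set α := αt / ρ₁ with hα
  set β := βt / ρ₁ with hβ
  have hαnn : 0 ≤ α := div_nonneg hαt hρ₁pos.le
  have hβnn : 0 ≤ β := div_nonneg hβt hρ₁pos.le
  have hαeq : α * ρ₁ = αt := div_mul_cancel₀ _ hρ₁pos.ne'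
  have hβeq : β * ρ₁ = βt := div_mul_cancel₀ _ hρ₁pos.ne'
  have hcb : α * βt ≤ 1 - lst * lut / ρ₂ := by
    rw [hα, div_mul_eq_mul_div, div_le_iff₀ hρ₁pos]
    nlinarith
  have hcρ₂ : lst * lut ≤ ρ₂ * (1 - α * βt) := by
    have h2 : lst * lut / ρ₂ * ρ₂ = lst * lut := div_mul_cancel₀ _ hρ₂pos.ne'
    nlinarith
  have hcpos : 0 < 1 - α * βt := by nlinarith
  have hswap : β * αt = α * βt := by rw [hα, hβ]; ring
  rw [hswap]
  refine ⟨by linarith, ?_, ?_, ?_, ?_⟩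
  · intro x₁ x₁' y₂ y₂' h
    have htG := dist_triangle (G x₁ y₂) (G x₁ y₂') (G x₁' y₂')
    have hG1 := hA'G x₁ y₂ y₂'
    have hG2 := hB'G y₂' x₁ x₁'
    have htF := dist_triangle (F x₁ y₂) (F x₁ y₂') (F x₁' y₂')
    have hF1 := hA'F x₁ y₂ y₂'
    have hF2 := hB'F y₂' x₁ x₁'
    have hdG : dist (G x₁ y₂) (G x₁' y₂') ≤ lut * dist y₂ y₂' + βt * dist x₁ x₁' := by
      linarith
    have hdF : dist (F x₁ y₂) (F x₁' y₂') ≤ αt * dist y₂ y₂' + lst * dist x₁ x₁' := by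
      linarith
    have hdx : (1 - α * βt) * dist x₁ x₁' ≤ α * lut * dist y₂ y₂' := by
      have h0 := h.trans (mul_le_mul_of_nonneg_left hdG hαnn)
      linarith [h0]
    constructor
    · have hlstdx : lst * dist x₁ x₁' ≤ ρ₂ * α * dist y₂ y₂' := by
        have h1 : lst * ((1 - α * βt) * dist x₁ x₁') ≤ lst * (α * lut * dist y₂ y₂') :=
          mul_le_mul_of_nonneg_left hdx hlst.le
        have h2 : lst * lut * (α * dist y₂ y₂') ≤ ρ₂ * (1 - α * βt) * (α * dist y₂ y₂') :=
          mul_le_mul_of_nonneg_right hcρ₂ (mul_nonneg hαnn dist_nonneg)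
        have h3 : (1 - α * βt) * (lst * dist x₁ x₁') ≤ (1 - α * βt) * (ρ₂ * α * dist y₂ y₂') := by
          linarith [h1, h2]
        exact le_of_mul_le_mul_left h3 hcpos
      have hre : αt * dist y₂ y₂' = ρ₁ * α * dist y₂ y₂' := by rw [← hαeq]; ring
      have hre2 : (ρ₁ + ρ₂) * α * dist y₂ y₂'
          = ρ₁ * α * dist y₂ y₂' + ρ₂ * α * dist y₂ y₂' := by ring
      linarith
    · rw [div_mul_eq_mul_div, le_div_iff₀ hcpos]
      have h1 := mul_le_mul_of_nonneg_right hdG hcpos.le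
      have h2 := mul_le_mul_of_nonneg_left hdx hβt
      linarith [h1, h2]
  · intro x₁ x₁' y₂ y₂' h
    have htG := dist_triangle (G x₁ y₂) (G x₁ y₂') (G x₁' y₂')
    have hG1 := hA'G x₁ y₂ y₂'
    have hG2 := hB'G y₂' x₁ x₁'
    have htF := dist_triangle (F x₁ y₂) (F x₁ y₂') (F x₁' y₂')
    have hF1 := hA'F x₁ y₂ y₂'
    have hF2 := hB'F y₂' x₁ x₁'
    have hdG : dist (G x₁ y₂) (G x₁' y₂') ≤ lut * dist y₂ y₂' + βt * dist x₁ x₁' := by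
      linarith
    have hdF : dist (F x₁ y₂) (F x₁' y₂') ≤ αt * dist y₂ y₂' + lst * dist x₁ x₁' := by
      linarith
    have hdFc : (1 - α * βt) * dist (F x₁ y₂) (F x₁' y₂') ≤ lst * dist x₁ x₁' := by
      have h1 : αt * dist y₂ y₂' ≤ αt * (β * dist (F x₁ y₂) (F x₁' y₂')) :=
        mul_le_mul_of_nonneg_left h hαt
      have h2 : αt * (β * dist (F x₁ y₂) (F x₁' y₂'))
          = α * βt * dist (F x₁ y₂) (F x₁' y₂') := by rw [← hswap]; ring
      linarith [h1]
    constructor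
    · have hlutdF : lut * β * dist (F x₁ y₂) (F x₁' y₂') ≤ ρ₂ * β * dist x₁ x₁' := by
        have h1 : lut * β * ((1 - α * βt) * dist (F x₁ y₂) (F x₁' y₂'))
            ≤ lut * β * (lst * dist x₁ x₁') :=
          mul_le_mul_of_nonneg_left hdFc (mul_nonneg hlut.le hβnn)
        have h2 : lst * lut * (β * dist x₁ x₁') ≤ ρ₂ * (1 - α * βt) * (β * dist x₁ x₁') :=
          mul_le_mul_of_nonneg_right hcρ₂ (mul_nonneg hβnn dist_nonneg)
        have h3 : (1 - α * βt) * (lut * β * dist (F x₁ y₂) (F x₁' y₂'))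
            ≤ (1 - α * βt) * (ρ₂ * β * dist x₁ x₁') := by linarith [h1, h2]
        exact le_of_mul_le_mul_left h3 hcpos
      have h4 : lut * dist y₂ y₂' ≤ lut * (β * dist (F x₁ y₂) (F x₁' y₂')) :=
        mul_le_mul_of_nonneg_left h hlut.le
      have hre : βt * dist x₁ x₁' = ρ₁ * β * dist x₁ x₁' := by rw [← hβeq]; ring
      have hre2 : (ρ₁ + ρ₂) * β * dist x₁ x₁'
          = ρ₁ * β * dist x₁ x₁' + ρ₂ * β * dist x₁ x₁' := by ring
      have h5 : lut * (β * dist (F x₁ y₂) (F x₁' y₂'))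
          = lut * β * dist (F x₁ y₂) (F x₁' y₂') := by ring
      linarith
    · rw [div_mul_eq_mul_div, le_div_iff₀ hcpos]
      linarith [hdFc]
  · have h1 : α * β * ρ₁ = α * βt := by rw [← hβeq]; ring
    nlinarith [h1, hcb, hρ₁l, hρ₁pos]
  · rw [div_mul_div_comm, div_lt_one (by positivity)]
    nlinarith [mul_le_mul hcρ₂ hcρ₂ hllpos.le (by positivity : (0:ℝ) ≤ ρ₂ * (1 - α * βt)),
      mul_pos hρ₂pos hρ₂pos, mul_pos hcpos hcpos, hρ₂sq, hllpos]
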